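/- In the two-party setting with ζ[0] = 0, in any execution of the Eneström–Phragmén procedure: if s ≤ n−3, α[s] = β[s], and seat s+1 is allocated to A, then α[s+1] < β[s+1] (so seat s+2 is allocated to B) and α[s+2] = β[s+2] (so seat s+3 is again the matter of a tie); and symmetrically with A and B interchanged. -/
import Mathlib


/-!
The Eneström–Phragmén procedure in the two-party setting: the candidates are two
parties `A` and `B` of unlimited capacity, and the vote types are `{A}`, `{B}` and
`{A,B}` with step-`s` weights (divided by the total vote `v`) denoted `α s`, `β s`
and `ζ s` respectively; `ρ n = q / v = 1 / (n + 1)` is the normalized Droop quota.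
At step `s < n`, seat `s + 1` goes to `A` (recorded by `toA s = true`) or to `B`
(`toA s = false`); the winner must maximize the support (`α s + ζ s` for `A`,
`β s + ζ s` for `B`), and the votes approving the winner are reduced according
to the quota rule.
-/

namespace EP2

/-- The normalized Droop quota `ρ = q / v = 1 / (n + 1)`. -/
noncomputable def ρ (n : ℕ) : ℝ := 1 / (n + 1)

/-- An execution of the Eneström–Phragmén procedure in the two-party setting, with
`n` seats and initial normalized weights `α0, β0, ζ0` of the vote types
`{A}`, `{B}`, `{A,B}`. -/
structure TPExec (n : ℕ) (α0 β0 ζ0 : ℝ) : Type where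
  /-- normalized weight of the votes approving only `A` -/
  α : ℕ → ℝ
  /-- normalized weight of the votes approving only `B` -/
  β : ℕ → ℝ
  /-- normalized weight of the votes approving both `A` and `B` -/
  ζ : ℕ → ℝ
  /-- `toA s = true` iff seat `s + 1` is allocated to party `A` -/
  toA : ℕ → Bool
  init_α : α 0 = α0
  init_β : β 0 = β0
  init_ζ : ζ 0 = ζ0
  /-- the winner maximizes the support: if `A` wins then `β s + ζ s ≤ α s + ζ s` -/
  choiceA : ∀ s < n, toA s = true → β s ≤ α s
  /-- the winner maximizes the support: if `B` wins then `α s + ζ s ≤ β s + ζ s` -/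
  choiceB : ∀ s < n, toA s = false → α s ≤ β s
  stepA_ge : ∀ s < n, toA s = true → ρ n ≤ α s + ζ s →
    α (s + 1) = (1 - ρ n / (α s + ζ s)) * α s ∧
    ζ (s + 1) = (1 - ρ n / (α s + ζ s)) * ζ s
  stepA_lt : ∀ s < n, toA s = true → α s + ζ s < ρ n →
    α (s + 1) = 0 ∧ ζ (s + 1) = 0
  stepA_β : ∀ s < n, toA s = true → β (s + 1) = β s
  stepB_ge : ∀ s < n, toA s = false → ρ n ≤ β s + ζ s →
    β (s + 1) = (1 - ρ n / (β s + ζ s)) * β s ∧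
    ζ (s + 1) = (1 - ρ n / (β s + ζ s)) * ζ s
  stepB_lt : ∀ s < n, toA s = false → β s + ζ s < ρ n →
    β (s + 1) = 0 ∧ ζ (s + 1) = 0
  stepB_α : ∀ s < n, toA s = false → α (s + 1) = α s

/-- Number of seats allocated to party `A` during steps `a, …, b - 1`. -/
def cntA {n : ℕ} {α0 β0 ζ0 : ℝ} (E : TPExec n α0 β0 ζ0) (a b : ℕ) : ℕ :=
  ((Finset.Ico a b).filter (fun s => E.toA s = true)).card

/-- Number of seats allocated to party `B` during steps `a, …, b - 1`. -/
def cntB {n : ℕ} {α0 β0 ζ0 : ℝ} (E : TPExec n α0 β0 ζ0) (a b : ℕ) : ℕ :=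
  ((Finset.Ico a b).filter (fun s => E.toA s = false)).card

/-- Total number of seats allocated to party `A`. -/
def nA {n : ℕ} {α0 β0 ζ0 : ℝ} (E : TPExec n α0 β0 ζ0) : ℕ := cntA E 0 n

end EP2

open EP2 in
/-- Lemma 3 of the paper: in the two-party setting with `ζ[0] = 0`, in
any execution, if `s ≤ n-3`, `α[s] = β[s]` and seat `s+1` goes to `A`, then
`α[s+1] < β[s+1]` (so seat `s+2` goes to `B`) and `α[s+2] = β[s+2]` (so seat `s+3` is
again the matter of a tie); and symmetrically with `A` and `B` interchanged. -/
theorem enestrom_phragmen_two_party_ties_recur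
    (n : ℕ) (hn : 1 ≤ n) (α0 β0 : ℝ)
    (hα0 : 0 < α0) (hβ0 : 0 < β0) (hsum : α0 + β0 + 0 = 1)
    (E : TPExec n α0 β0 0) (s : ℕ) (hs : s + 3 ≤ n) (htie : E.α s = E.β s) :
    (E.toA s = true →
      E.α (s + 1) < E.β (s + 1) ∧ E.toA (s + 1) = false ∧
      E.α (s + 2) = E.β (s + 2)) ∧
    (E.toA s = false →
      E.β (s + 1) < E.α (s + 1) ∧ E.toA (s + 1) = true ∧
      E.α (s + 2) = E.β (s + 2)) := by
  have hρ : 0 < ρ n := by unfold ρ; positivity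
  -- ζ stays zero
  have hζ : ∀ t, t ≤ n → E.ζ t = 0 := by
    intro t
    induction t with
    | zero => intro _; exact E.init_ζ
    | succ t ih =>
      intro ht
      have ht' : t < n := ht
      have hz := ih ht'.le
      cases hA : E.toA t with
      | true =>
        rcases le_or_gt (ρ n) (E.α t + E.ζ t) with h | h
        · rw [(E.stepA_ge t ht' hA h).2, hz, mul_zero]
        · exact (E.stepA_lt t ht' hA h).2
      | false =>
        rcases le_or_gt (ρ n) (E.β t + E.ζ t) with h | h
        · rw [(E.stepB_ge t ht' hA h).2, hz, mul_zero]
        · exact (E.stepB_lt t ht' hA h).2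
  -- total weight lower bound
  have htot : ∀ t, t ≤ n → 1 - t * ρ n ≤ E.α t + E.β t := by
    intro t
    induction t with
    | zero => intro _; rw [E.init_α, E.init_β]; push_cast; linarith
    | succ t ih =>
      intro ht
      have ht' : t < n := ht
      have hz := hζ t ht'.le
      have ihh := ih ht'.le
      have key : E.α t + E.β t - ρ n ≤ E.α (t + 1) + E.β (t + 1) := by
        cases hA : E.toA t with
        | true =>
          have hβ := E.stepA_β t ht' hA
          rcases le_or_gt (ρ n) (E.α t + E.ζ t) with h | h
          · have hα := (E.stepA_ge t ht' hA h).1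
            rw [hz, add_zero] at hα h
            have hαne : E.α t ≠ 0 := ne_of_gt (lt_of_lt_of_le hρ h)
            have : E.α (t + 1) = E.α t - ρ n := by
              rw [hα]; field_simp
            rw [this, hβ]; linarith
          · have hα := (E.stepA_lt t ht' hA h).1
            rw [hz, add_zero] at h
            rw [hα, hβ]; linarith
        | false =>
          have hα := E.stepB_α t ht' hA
          rcases le_or_gt (ρ n) (E.β t + E.ζ t) with h | h
          · have hβ := (E.stepB_ge t ht' hA h).1
            rw [hz, add_zero] at hβ h
            have hβne : E.β t ≠ 0 := ne_of_gt (lt_of_lt_of_le hρ h)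
            have : E.β (t + 1) = E.β t - ρ n := by
              rw [hβ]; field_simp
            rw [this, hα]; ring_nf; linarith
          · have hβ := (E.stepB_lt t ht' hA h).1
            rw [hz, add_zero] at h
            rw [hα, hβ]; linarith
      have hcast : ((t + 1 : ℕ) : ℝ) = (t : ℝ) + 1 := by push_cast; ring
      rw [hcast]
      linarith
  have hsn : s < n := by omega
  have hs1n : s + 1 < n := by omega
  have hs2n : s + 2 < n := by omega
  -- α s = β s ≥ 2ρ
  have h1 : ((n : ℝ) + 1) * ρ n = 1 := by
    unfold ρ; field_simp
  have hscast : (s : ℝ) ≤ (n : ℝ) - 3 := by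
    have : (s : ℝ) + 3 ≤ (n : ℝ) := by exact_mod_cast hs
    linarith
  have hlow : 4 * ρ n ≤ 1 - (s : ℝ) * ρ n := by nlinarith
  have htots := htot s hsn.le
  have h2ρ : 2 * ρ n ≤ E.α s := by nlinarith [htie]
  have h2ρβ : 2 * ρ n ≤ E.β s := by rw [← htie]; exact h2ρ
  have hζs := hζ s hsn.le
  have hζs1 := hζ (s + 1) hs1n.le
  constructor
  · intro hA
    have hge : ρ n ≤ E.α s + E.ζ s := by rw [hζs, add_zero]; linarith
    have hα1 := (E.stepA_ge s hsn hA hge).1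
    rw [hζs, add_zero] at hα1
    have hαne : E.α s ≠ 0 := by nlinarith
    have hα1' : E.α (s + 1) = E.α s - ρ n := by rw [hα1]; field_simp
    have hβ1 : E.β (s + 1) = E.β s := E.stepA_β s hsn hA
    have hlt : E.α (s + 1) < E.β (s + 1) := by
      rw [hα1', hβ1, ← htie]; linarith
    have htoA1 : E.toA (s + 1) = false := by
      cases h : E.toA (s + 1) with
      | false => rfl
      | true =>
        have := E.choiceA (s + 1) hs1n h
        linarith
    refine ⟨hlt, htoA1, ?_⟩
    have hge2 : ρ n ≤ E.β (s + 1) + E.ζ (s + 1) := by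
      rw [hζs1, add_zero, hβ1, ← htie]; linarith
    have hβ2 := (E.stepB_ge (s + 1) hs1n htoA1 hge2).1
    rw [hζs1, add_zero] at hβ2
    have hβne : E.β (s + 1) ≠ 0 := by rw [hβ1, ← htie]; nlinarith
    have hβ2' : E.β (s + 2) = E.β (s + 1) - ρ n := by rw [hβ2]; field_simp
    have hα2 : E.α (s + 2) = E.α (s + 1) := E.stepB_α (s + 1) hs1n htoA1
    rw [hα2, hβ2', hα1', hβ1, ← htie]
  · intro hA
    have hge : ρ n ≤ E.β s + E.ζ s := by rw [hζs, add_zero]; linarith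
    have hβ1 := (E.stepB_ge s hsn hA hge).1
    rw [hζs, add_zero] at hβ1
    have hβne : E.β s ≠ 0 := by nlinarith
    have hβ1' : E.β (s + 1) = E.β s - ρ n := by rw [hβ1]; field_simp
    have hα1 : E.α (s + 1) = E.α s := E.stepB_α s hsn hA
    have hlt : E.β (s + 1) < E.α (s + 1) := by
      rw [hβ1', hα1, htie]; linarith
    have htoA1 : E.toA (s + 1) = true := by
      cases h : E.toA (s + 1) with
      | true => rfl
      | false =>
        have := E.choiceB (s + 1) hs1n h
        linarith
    refine ⟨hlt, htoA1, ?_⟩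
    have hge2 : ρ n ≤ E.α (s + 1) + E.ζ (s + 1) := by
      rw [hζs1, add_zero, hα1]; linarith
    have hα2 := (E.stepA_ge (s + 1) hs1n htoA1 hge2).1
    rw [hζs1, add_zero] at hα2
    have hαne : E.α (s + 1) ≠ 0 := by rw [hα1]; nlinarith
    have hα2' : E.α (s + 2) = E.α (s + 1) - ρ n := by rw [hα2]; field_simp
    have hβ2 : E.β (s + 2) = E.β (s + 1) := E.stepA_β (s + 1) hs1n htoA1
    rw [hβ2, hα2', hα1, hβ1', htie]
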